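/- Let F be a closed subbifunctor of Ext^1 and let P• be a bounded-above complex of F-projective objects. If f• : X• → P• is an F-quasi-isomorphism of complexes, then there exists a chain map g• : P• → X• such that g•∘f• (composition P• → X• → P•) is homotopic to the identity of P•. -/

import Mathlib

open CategoryTheory CategoryTheory.Limits CategoryTheory.Category

universe w v u v' u'

namespace RelDer

variable {𝒜 : Type u} [Category.{v} 𝒜] [Abelian 𝒜]

/-- `g` is an `F`-epimorphism: it fits into an `F`-exact short exact sequence. -/
def FEpi (F : ShortComplex 𝒜 → Prop) {B C : 𝒜} (g : B ⟶ C) : Prop :=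
  ∃ (K : 𝒜) (k : K ⟶ B) (w : k ≫ g = 0), F (ShortComplex.mk k g w)

/-- `f` is an `F`-monomorphism. -/
def FMono (F : ShortComplex 𝒜 → Prop) {A B : 𝒜} (f : A ⟶ B) : Prop :=
  ∃ (C : 𝒜) (g : B ⟶ C) (w : f ≫ g = 0), F (ShortComplex.mk f g w)

/-- `P` is `F`-projective: `Hom(P,-)` sends `F`-exact sequences to exact sequences. -/
def FProjective (F : ShortComplex 𝒜 → Prop) (P : 𝒜) : Prop :=
  ∀ (S : ShortComplex 𝒜), F S → ∀ (p : P ⟶ S.X₃), ∃ q : P ⟶ S.X₂, q ≫ S.g = p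

/-- `I` is `F`-injective. -/
def FInjective (F : ShortComplex 𝒜 → Prop) (I : 𝒜) : Prop :=
  ∀ (S : ShortComplex 𝒜), F S → ∀ (p : S.X₁ ⟶ I), ∃ q : S.X₂ ⟶ I, S.f ≫ q = p

/-- `F` has enough projectives. -/
def HasEnoughFProjectives (F : ShortComplex 𝒜 → Prop) : Prop :=
  ∀ M : 𝒜, ∃ (P : 𝒜) (g : P ⟶ M), FProjective F P ∧ FEpi F g

/-- `F` has enough injectives. -/
def HasEnoughFInjectives (F : ShortComplex 𝒜 → Prop) : Prop :=
  ∀ M : 𝒜, ∃ (I : 𝒜) (f : M ⟶ I), FInjective F I ∧ FMono F f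

lemma image_ι_comp_d (X : CochainComplex 𝒜 ℤ) (i : ℤ) :
    image.ι (X.d (i-1) i) ≫ X.d i (i+1) = 0 := by
  rw [← cancel_epi (factorThruImage (X.d (i-1) i)), image.fac_assoc,
    HomologicalComplex.d_comp_d, comp_zero]

/-- The short complex `Im d^{i-1} → X^i → Im d^i` associated to a cochain complex. -/
noncomputable def imagesShortComplex (X : CochainComplex 𝒜 ℤ) (i : ℤ) : ShortComplex 𝒜 :=
  ShortComplex.mk (image.ι (X.d (i-1) i)) (factorThruImage (X.d i (i+1)))
    (by rw [← cancel_mono (image.ι (X.d i (i+1))), assoc, image.fac, zero_comp,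
      image_ι_comp_d])

/-- A complex is `F`-acyclic if each `0 → Im d^{i-1} → X^i → Im d^i → 0` is `F`-exact. -/
def FAcyclic (F : ShortComplex 𝒜 → Prop) (X : CochainComplex 𝒜 ℤ) : Prop :=
  ∀ i : ℤ, F (imagesShortComplex X i)

/-- A chain map is an `F`-quasi-isomorphism if its mapping cone is `F`-acyclic. -/
def FQuasiIso (F : ShortComplex 𝒜 → Prop) {X Y : CochainComplex 𝒜 ℤ} (f : X ⟶ Y) : Prop :=
  FAcyclic F (CochainComplex.mappingCone f)

def BoundedAbove (X : CochainComplex 𝒜 ℤ) : Prop :=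
  ∃ n : ℤ, ∀ i, n < i → IsZero (X.X i)

def Bounded (X : CochainComplex 𝒜 ℤ) : Prop :=
  ∃ a b : ℤ, ∀ i, (i < a ∨ b < i) → IsZero (X.X i)

/-- An equivalence of (pre)triangulated categories. -/
structure TriangleEquivalence (C : Type u) (D : Type u') [Category.{v} C] [Category.{v'} D]
    [HasShift C ℤ] [HasShift D ℤ] [Preadditive C] [Preadditive D]
    [HasZeroObject C] [HasZeroObject D]
    [∀ n : ℤ, (shiftFunctor C n).Additive] [∀ n : ℤ, (shiftFunctor D n).Additive]
    [Pretriangulated C] [Pretriangulated D] where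
  e : C ≌ D
  commShift : e.functor.CommShift ℤ
  isTriangulated : letI := commShift; e.functor.IsTriangulated

/-- Two maps are stably equal if their difference factors through an object satisfying `P`. -/
def stableHomRel (P : 𝒜 → Prop) : HomRel 𝒜 := fun {X Y} f g =>
  ∃ (Z : 𝒜) (_ : P Z) (a : X ⟶ Z) (b : Z ⟶ Y), f - g = a ≫ b

/-- The stable category of `𝒜` modulo objects satisfying `P`. -/
abbrev StableCategory (P : 𝒜 → Prop) := CategoryTheory.Quotient (stableHomRel P)

/-- The complex `Hom(P^•, Y)` of abelian groups, whose homology computes relative Ext. -/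
noncomputable def homComplex (P : CochainComplex 𝒜 ℤ) (Y : 𝒜) :
    HomologicalComplex AddCommGrpCat (ComplexShape.up ℤ).symm :=
  ((preadditiveYoneda.obj Y).mapHomologicalComplex (ComplexShape.up ℤ).symm).obj P.op

/-- The relative Ext group `Ext^i_F(X,Y)` computed from an `F`-projective resolution `P` of
`X` as the `i`-th cohomology of `Hom(P^•,Y)`. -/
noncomputable def extFGroup (P : CochainComplex 𝒜 ℤ) (Y : 𝒜) (i : ℤ) : AddCommGrpCat :=
  (homComplex P Y).homology (-i)

/-- `P`, together with the augmentation `ε`, is an `F`-projective resolution of `X`. -/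
def IsFProjResolution (F : ShortComplex 𝒜 → Prop) (X : 𝒜) (P : CochainComplex 𝒜 ℤ)
    (ε : P ⟶ (CochainComplex.singleFunctor 𝒜 0).obj X) : Prop :=
  (∀ i : ℤ, 0 < i → IsZero (P.X i)) ∧ (∀ i : ℤ, FProjective F (P.X i)) ∧ FQuasiIso F ε

/-- `X` has `F`-projective dimension at most `m`. -/
def FProjDimLe (F : ShortComplex 𝒜 → Prop) (X : 𝒜) (m : ℕ) : Prop :=
  ∃ (P : CochainComplex 𝒜 ℤ) (ε : P ⟶ (CochainComplex.singleFunctor 𝒜 0).obj X),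
    IsFProjResolution F X P ε ∧ ∀ i : ℤ, i < -(m : ℤ) → IsZero (P.X i)

/-- `I`, together with the augmentation `ε`, is an `F`-injective coresolution of `X`. -/
def IsFInjCoresolution (F : ShortComplex 𝒜 → Prop) (X : 𝒜) (I : CochainComplex 𝒜 ℤ)
    (ε : (CochainComplex.singleFunctor 𝒜 0).obj X ⟶ I) : Prop :=
  (∀ i : ℤ, i < 0 → IsZero (I.X i)) ∧ (∀ i : ℤ, FInjective F (I.X i)) ∧ FQuasiIso F ε

/-- `X` has `F`-injective dimension at most `m`. -/
def FInjDimLe (F : ShortComplex 𝒜 → Prop) (X : 𝒜) (m : ℕ) : Prop :=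
  ∃ (I : CochainComplex 𝒜 ℤ) (ε : (CochainComplex.singleFunctor 𝒜 0).obj X ⟶ I),
    IsFInjCoresolution F X I ε ∧ ∀ i : ℤ, (m : ℤ) < i → IsZero (I.X i)

/-- The `F`-projective dimension of `X`, valued in `ℕ∞`. -/
noncomputable def FProjDim (F : ShortComplex 𝒜 → Prop) (X : 𝒜) : ℕ∞ :=
  sInf {n : ℕ∞ | ∃ m : ℕ, n = m ∧ FProjDimLe F X m}

/-- The `F`-injective dimension of `X`, valued in `ℕ∞`. -/
noncomputable def FInjDim (F : ShortComplex 𝒜 → Prop) (X : 𝒜) : ℕ∞ :=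
  sInf {n : ℕ∞ | ∃ m : ℕ, n = m ∧ FInjDimLe F X m}

/-- The `F`-global dimension. -/
noncomputable def FGlobalDim (F : ShortComplex 𝒜 → Prop) : ℕ∞ :=
  ⨆ X : 𝒜, FProjDim F X

/-- The `F`-finitistic dimension. -/
noncomputable def FFinitisticDim (F : ShortComplex 𝒜 → Prop) : ℕ∞ :=
  ⨆ X : {X : 𝒜 // FProjDim F X ≠ ⊤}, FProjDim F X.1

/-- The class of all short exact sequences: the absolute (non-relative) exact structure. -/
def allExact : ShortComplex 𝒜 → Prop := fun S => S.ShortExact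

/-- `M` belongs to `add G`. -/
def InAdd (G M : 𝒜) : Prop :=
  haveI : HasFiniteBiproducts 𝒜 := Abelian.hasFiniteBiproducts
  ∃ (n : ℕ) (N : 𝒜), Nonempty ((M ⊞ N) ≅ (⨁ fun _ : Fin n => G))

namespace Triangulated

open Pretriangulated in
/-- The structure `Triangulated.Subcategory` of the older Mathlib (since removed), restated
with its old fields. -/
structure Subcategory (C : Type u') [Category.{v'} C] [HasZeroObject C] [HasShift C ℤ]
    [Preadditive C] [∀ n : ℤ, (shiftFunctor C n).Additive] [Pretriangulated C] where
  P : C → Prop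
  zero' : ∃ (Z : C) (_ : IsZero Z), P Z
  shift (X : C) (n : ℤ) : P X → P (X⟦n⟧)
  ext₂' (T : Triangle C) (_ : T ∈ distTriang C) : P T.obj₁ → P T.obj₃ →
    ∃ (Y : C) (_ : P Y), Nonempty (T.obj₂ ≅ Y)

end Triangulated

/-- `T` generates the objects satisfying `Gen` as a triangulated category
(closed under isomorphisms and retracts/direct summands). -/
def Generates {𝒯 : Type u'} [Category.{v'} 𝒯] [HasZeroObject 𝒯] [HasShift 𝒯 ℤ]
    [Preadditive 𝒯] [∀ n : ℤ, (shiftFunctor 𝒯 n).Additive] [Pretriangulated 𝒯]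
    (T : 𝒯) (Gen : 𝒯 → Prop) : Prop :=
  ∀ (S : Triangulated.Subcategory 𝒯),
    (∀ X Y : 𝒯, (X ≅ Y) → S.P X → S.P Y) →
    (∀ X Y : 𝒯, (∃ (r : X ⟶ Y) (s : Y ⟶ X), s ≫ r = 𝟙 Y) → S.P X → S.P Y) →
    S.P T → ∀ X : 𝒯, Gen X → S.P X

universe u₁ v₁ u₂ v₂ u₃ v₃

section Aux

/-- Lifting against an `F`-acyclic complex: a map that is killed by the next differential
factors through the previous differential, provided the source is `F`-projective. -/
lemma step_lift (F : ShortComplex 𝒜 → Prop) (hSE : ∀ S, F S → S.ShortExact)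
    (A : CochainComplex 𝒜 ℤ) (hA : FAcyclic F A) {Q : 𝒜}
    (hQ : FProjective F Q) (t j : ℤ) (htj : t + 1 = j) (ψ : Q ⟶ A.X j)
    (hψ : ψ ≫ A.d j (j + 1) = 0) :
    ∃ h : Q ⟶ A.X t, h ≫ A.d t j = ψ := by
  have hSj : (imagesShortComplex A j).ShortExact := hSE _ (hA j)
  haveI := hSj.mono_f
  have h0 : ψ ≫ (imagesShortComplex A j).g = 0 := by
    show ψ ≫ factorThruImage (A.d j (j + 1)) = 0
    rw [← cancel_mono (image.ι (A.d j (j + 1))), assoc, image.fac, zero_comp]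
    exact hψ
  have hψ' : hSj.exact.lift ψ h0 ≫ image.ι (A.d (j - 1) j) = ψ := hSj.exact.lift_f ψ h0
  have hrel1 : (ComplexShape.up ℤ).Rel (j - 1) j := by simp
  have hrel2 : (ComplexShape.up ℤ).Rel t j := htj
  have hrel3 : (ComplexShape.up ℤ).Rel t (t + 1) := rfl
  have hX1 : A.X (j - 1) = A.X t :=
    congr_arg A.X ((ComplexShape.up ℤ).prev_eq hrel1 hrel2)
  have hX2 : A.X (t + 1) = A.X j :=
    congr_arg A.X ((ComplexShape.up ℤ).next_eq hrel3 hrel2)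
  have hd1 : eqToHom hX1 ≫ A.d t j = A.d (j - 1) j := A.eqToHom_comp_d hrel1 hrel2
  have hd2 : A.d t (t + 1) ≫ eqToHom hX2 = A.d t j := A.d_comp_eqToHom hrel2 hrel3
  -- the mono factorisation of `A.d (j-1) j` through `image (A.d t (t+1))`
  set MF : MonoFactorisation (A.d (j - 1) j) :=
    { I := image (A.d t (t + 1))
      m := image.ι (A.d t (t + 1)) ≫ eqToHom hX2
      e := eqToHom hX1 ≫ factorThruImage (A.d t (t + 1))
      fac := by rw [assoc, ← assoc (factorThruImage _), image.fac, hd2, hd1] } with hMF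
  set E : image (A.d (j - 1) j) ⟶ image (A.d t (t + 1)) := image.lift MF with hE
  have hEι : E ≫ image.ι (A.d t (t + 1)) ≫ eqToHom hX2 = image.ι (A.d (j - 1) j) :=
    image.lift_fac MF
  have hF2 : F (imagesShortComplex A t) := hA t
  obtain ⟨q, hq⟩ : ∃ q : Q ⟶ A.X t, q ≫ factorThruImage (A.d t (t + 1)) =
      hSj.exact.lift ψ h0 ≫ E := hQ _ hF2 (hSj.exact.lift ψ h0 ≫ E)
  have hq' : q ≫ factorThruImage (A.d t (t + 1)) = hSj.exact.lift ψ h0 ≫ E := hq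
  refine ⟨q, ?_⟩
  rw [← hd2, ← image.fac (A.d t (t + 1)), ← assoc, ← assoc, hq']
  exact (assoc (hSj.exact.lift ψ h0 ≫ E) (image.ι (A.d t (t + 1))) (eqToHom hX2)).trans <|
    (assoc (hSj.exact.lift ψ h0) E (image.ι (A.d t (t + 1)) ≫ eqToHom hX2)).trans ((congrArg (fun x => hSj.exact.lift ψ h0 ≫ x) hEι).trans hψ')

/-- The commutation condition for a would-be null-homotopy at position `i`,
formulated without subtraction of indices. -/
def HComm (P A : CochainComplex 𝒜 ℤ) (φ : P ⟶ A) (h : ∀ i j : ℤ, P.X i ⟶ A.X j)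
    (i : ℤ) : Prop :=
  ∀ t s : ℤ, t + 1 = i → i + 1 = s →
    φ.f i = P.d i s ≫ h s i + h i t ≫ A.d t i

/-- Extension step: a partial null-homotopy defined above `i₀` can be extended to `i₀`. -/
lemma extendRow (F : ShortComplex 𝒜 → Prop) (hSE : ∀ S, F S → S.ShortExact)
    (A P : CochainComplex 𝒜 ℤ) (hA : FAcyclic F A)
    (hProj : ∀ i : ℤ, FProjective F (P.X i)) (φ : P ⟶ A) (i₀ : ℤ)
    (h : ∀ i j : ℤ, P.X i ⟶ A.X j) (hcomm : ∀ i, i₀ < i → HComm P A φ h i) :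
    ∃ h' : ∀ i j : ℤ, P.X i ⟶ A.X j,
      (∀ i, i₀ ≤ i → HComm P A φ h' i) ∧ ∀ i j, i ≠ i₀ → h' i j = h i j := by
  have hc1 := hcomm (i₀ + 1) (by omega) i₀ (i₀ + 1 + 1) rfl rfl
  set ψ : P.X i₀ ⟶ A.X i₀ := φ.f i₀ - P.d i₀ (i₀ + 1) ≫ h (i₀ + 1) i₀ with hψdef
  have hψ : ψ ≫ A.d i₀ (i₀ + 1) = 0 := by
    rw [hψdef, Preadditive.sub_comp, assoc, φ.comm i₀ (i₀ + 1), hc1]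
    simp [HomologicalComplex.d_comp_d_assoc]
  obtain ⟨newh, hnew⟩ := step_lift F hSE A hA (hProj i₀) (i₀ - 1) i₀ (by omega) ψ hψ
  refine ⟨fun i j => if hij : i = i₀ ∧ j + 1 = i₀ then
      eqToHom (congrArg P.X hij.1) ≫ newh ≫
        eqToHom (congrArg A.X (show i₀ - 1 = j from by omega))
    else h i j, ?_, ?_⟩
  · intro i hi
    rcases eq_or_lt_of_le hi with hEq | hLt
    · subst hEq
      intro t s ht hs
      subst hs
      beta_reduce
      rw [dif_neg (show ¬(i₀ + 1 = i₀ ∧ i₀ + 1 = i₀) from by omega),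
        dif_pos (⟨rfl, ht⟩ : i₀ = i₀ ∧ t + 1 = i₀), eqToHom_refl, id_comp, assoc,
        show eqToHom (congrArg A.X (show i₀ - 1 = t from by omega)) ≫ A.d t i₀
            = A.d (i₀ - 1) i₀ from
          A.eqToHom_comp_d (show (ComplexShape.up ℤ).Rel (i₀ - 1) i₀ from by simp)
            (show (ComplexShape.up ℤ).Rel t i₀ from ht),
        hnew, hψdef]
      abel
    · intro t s ht hs
      beta_reduce
      rw [dif_neg (show ¬(s = i₀ ∧ i + 1 = i₀) from by omega),
        dif_neg (show ¬(i = i₀ ∧ t + 1 = i₀) from by omega)]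
      exact hcomm i hLt t s ht hs
  · intro i j hne
    exact dif_neg (fun hc => hne hc.1)

/-- The successor step in the construction of the null-homotopy. -/
noncomputable def nextStep (F : ShortComplex 𝒜 → Prop) (hSE : ∀ S, F S → S.ShortExact)
    (A P : CochainComplex 𝒜 ℤ) (hA : FAcyclic F A)
    (hProj : ∀ i : ℤ, FProjective F (P.X i)) (φ : P ⟶ A) (n : ℤ) (k : ℕ)
    (prev : {h : ∀ i j : ℤ, P.X i ⟶ A.X j // ∀ i : ℤ, n - (k : ℤ) < i → HComm P A φ h i}) :
    {h : ∀ i j : ℤ, P.X i ⟶ A.X j // ∀ i : ℤ, n - ((k + 1 : ℕ) : ℤ) < i → HComm P A φ h i} :=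
  ⟨(extendRow F hSE A P hA hProj φ (n - (k : ℤ)) prev.1 prev.2).choose,
   fun i hi => (extendRow F hSE A P hA hProj φ (n - (k : ℤ)) prev.1 prev.2).choose_spec.1 i
     (by push_cast at hi; omega)⟩

lemma nextStep_eq (F : ShortComplex 𝒜 → Prop) (hSE : ∀ S, F S → S.ShortExact)
    (A P : CochainComplex 𝒜 ℤ) (hA : FAcyclic F A)
    (hProj : ∀ i : ℤ, FProjective F (P.X i)) (φ : P ⟶ A) (n : ℤ) (k : ℕ)
    (prev : {h : ∀ i j : ℤ, P.X i ⟶ A.X j // ∀ i : ℤ, n - (k : ℤ) < i → HComm P A φ h i})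
    (i j : ℤ) (hi : i ≠ n - (k : ℤ)) :
    (nextStep F hSE A P hA hProj φ n k prev).1 i j = prev.1 i j :=
  (extendRow F hSE A P hA hProj φ (n - (k : ℤ)) prev.1 prev.2).choose_spec.2 i j hi

/-- The sequence of better and better partial null-homotopies. -/
noncomputable def chainFam (F : ShortComplex 𝒜 → Prop) (hSE : ∀ S, F S → S.ShortExact)
    (A P : CochainComplex 𝒜 ℤ) (hA : FAcyclic F A)
    (hProj : ∀ i : ℤ, FProjective F (P.X i)) (φ : P ⟶ A) (n : ℤ)
    (hPn : ∀ i : ℤ, n < i → IsZero (P.X i)) :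
    (k : ℕ) → {h : ∀ i j : ℤ, P.X i ⟶ A.X j // ∀ i : ℤ, n - (k : ℤ) < i → HComm P A φ h i} :=
  Nat.rec
    ⟨fun _ _ => 0, fun i hi => by
      have h0 : φ.f i = 0 := (hPn i (by push_cast at hi; omega)).eq_of_src _ _
      intro t s ht hs
      simp [h0]⟩
    (fun k prev => nextStep F hSE A P hA hProj φ n k prev)

lemma exists_hFam (F : ShortComplex 𝒜 → Prop) (hSE : ∀ S, F S → S.ShortExact)
    (A P : CochainComplex 𝒜 ℤ) (hA : FAcyclic F A)
    (hProj : ∀ i : ℤ, FProjective F (P.X i)) (φ : P ⟶ A) (n : ℤ)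
    (hPn : ∀ i : ℤ, n < i → IsZero (P.X i)) :
    ∃ h : ∀ i j : ℤ, P.X i ⟶ A.X j, ∀ i : ℤ, HComm P A φ h i := by
  set C := chainFam F hSE A P hA hProj φ n hPn with hC
  refine ⟨fun i j => (C (n + 1 - i).toNat).1 i j, fun i t s ht hs => ?_⟩
  subst hs
  show φ.f i = P.d i (i + 1) ≫ (C ((n + 1 - (i + 1)).toNat)).1 (i + 1) i
      + (C ((n + 1 - i).toNat)).1 i t ≫ A.d t i
  have key : (C ((n + 1 - (i + 1)).toNat)).1 (i + 1) i
      = (C ((n + 1 - i).toNat)).1 (i + 1) i := by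
    by_cases hb : n + 1 - i ≤ 0
    · have he : (n + 1 - (i + 1)).toNat = (n + 1 - i).toNat := by omega
      rw [he]
    · have h1 : (n + 1 - i).toNat = (n + 1 - (i + 1)).toNat + 1 := by omega
      rw [h1]
      have h2 : C ((n + 1 - (i + 1)).toNat + 1)
          = nextStep F hSE A P hA hProj φ n _ (C ((n + 1 - (i + 1)).toNat)) := rfl
      rw [h2]
      exact (nextStep_eq F hSE A P hA hProj φ n _ _ (i + 1) i (by omega)).symm
  rw [key]
  exact (C ((n + 1 - i).toNat)).2 i (by omega) t (i + 1) ht rfl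

/-- A chain map from a bounded above complex of `F`-projectives to an `F`-acyclic complex
is null-homotopic. -/
lemma homotopyToAcyclic (F : ShortComplex 𝒜 → Prop) (hSE : ∀ S, F S → S.ShortExact)
    (A P : CochainComplex 𝒜 ℤ) (hA : FAcyclic F A)
    (hProj : ∀ i : ℤ, FProjective F (P.X i)) (φ : P ⟶ A) (n : ℤ)
    (hPn : ∀ i : ℤ, n < i → IsZero (P.X i)) :
    Nonempty (Homotopy φ 0) := by
  obtain ⟨h, hh⟩ := exists_hFam F hSE A P hA hProj φ n hPn
  refine ⟨{ hom := fun i j => if hij : j + 1 = i then h i j else 0,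
            zero := fun i j hij => dif_neg (by simpa using hij),
            comm := fun i => ?_ }⟩
  rw [dNext_eq _ (show (ComplexShape.up ℤ).Rel i (i + 1) from by simp),
    prevD_eq _ (show (ComplexShape.up ℤ).Rel (i - 1) i from by simp)]
  have hc := hh i (i - 1) (i + 1) (by omega) rfl
  rw [dif_pos rfl, dif_pos (show i - 1 + 1 = i from by omega)]
  simpa using hc

end Aux

/-- If `P^•` is a bounded above complex of `F`-projectives and `f : X^• → P^•` is an
`F`-quasi-isomorphism, then there is `g : P^• → X^•` with `g ∘ f ≃ id`. -/
theorem statement6 {𝒜 : Type u} [Category.{v} 𝒜] [Abelian 𝒜]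
    (F : ShortComplex 𝒜 → Prop) (hSE : ∀ S, F S → S.ShortExact)
    -- `F` is closed: `F`-acyclic complexes are stable under mapping cones
    (hclosed : ∀ (U V : CochainComplex 𝒜 ℤ) (u : U ⟶ V), FAcyclic F U → FAcyclic F V →
      FAcyclic F (CochainComplex.mappingCone u))
    (P X : CochainComplex 𝒜 ℤ) (hP : BoundedAbove P)
    (hProj : ∀ i : ℤ, FProjective F (P.X i))
    (f : X ⟶ P) (hf : FQuasiIso F f) :
    ∃ g : P ⟶ X, Nonempty (Homotopy (g ≫ f) (𝟙 P)) := by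
  classical
  obtain ⟨n, hn⟩ := hP
  obtain ⟨H⟩ := homotopyToAcyclic F hSE (CochainComplex.mappingCone f) P hf hProj
    (CochainComplex.mappingCone.inr f) n hn
  obtain ⟨z, hz⟩ := (CochainComplex.HomComplex.Cochain.equivHomotopy _ _) H
  rw [CochainComplex.HomComplex.Cochain.ofHom_zero, add_zero] at hz
  open CochainComplex.HomComplex CochainComplex.mappingCone in
  · set g₀ : Cochain P X 0 := z.comp (fst f).1 (by omega) with hg₀def
    have hδg₀ : δ 0 1 g₀ = 0 := by
      rw [hg₀def, δ_comp z (fst f).1 (by omega) 0 2 1 rfl (by omega) rfl]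
      simp [← hz]
    set g : P ⟶ X := Cocycle.homOf (Cocycle.mk g₀ 1 rfl hδg₀) with hgdef
    have hofg : Cochain.ofHom g = g₀ := by
      rw [hgdef]
      simpa using Cocycle.cochain_ofHom_homOf_eq_coe (Cocycle.mk g₀ 1 rfl hδg₀)
    set w : Cochain P P (-1) := z.comp (snd f) (add_zero (-1)) with hwdef
    have hδw : δ (-1) 0 w = -(g₀.comp (Cochain.ofHom f) (add_zero 0)) + Cochain.ofHom (𝟙 P) := by
      rw [hwdef, δ_comp z (snd f) (add_zero (-1)) 0 1 0 (by omega) (by omega) rfl, δ_snd,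
        ← hz, hg₀def]
      simp [Cochain.comp_assoc_of_third_is_zero_cochain]
    refine ⟨g, ⟨(Cochain.equivHomotopy _ _).symm ⟨-w, ?_⟩⟩⟩
    rw [Cochain.ofHom_comp, hofg, δ_neg, hδw]
    abel

end RelDer
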